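/- arXiv:0806.0150 — 6 statements merged into one kernel-verified Lean document; each statement's English description precedes it below -/
import Mathlib

section
/- ∑_{n=1}^∞ sin(n)/n = ∑_{n=1}^∞ (sin(n)/n)², i.e., the series ∑ sin(n)/n satisfies the property that its sum equals the sum of the squares of its terms. -/
open Real Filter Finset Topology

private lemma bern2 : (bernoulli 2 : ℚ) = 1/6 := by
  rw [bernoulli_eq_bernoulli'_of_ne_one (by norm_num), bernoulli'_two]

private lemma sum_Icc_eq_range' {f : ℕ → ℝ} (hf : f 0 = 0) (N : ℕ) :
    ∑ n ∈ Finset.Icc 1 N, f n = ∑ n ∈ Finset.range (N + 1), f n := by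
  induction N with
  | zero => simp [hf]
  | succ N ih =>
      rw [Finset.sum_Icc_succ_top (Nat.succ_le_succ (Nat.zero_le _)), ih,
        ← Finset.sum_range_succ]

private lemma tendsto_Icc_of_hasSum {f : ℕ → ℝ} (hf : f 0 = 0) {L : ℝ} (h : HasSum f L) :
    Tendsto (fun N : ℕ => ∑ n ∈ Finset.Icc 1 N, f n) atTop (𝓝 L) := by
  have h2 : Tendsto (fun N : ℕ => ∑ n ∈ Finset.range (N + 1), f n) atTop (𝓝 L) :=
    h.tendsto_sum_nat.comp (tendsto_add_atTop_nat 1)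
  exact h2.congr fun N => (sum_Icc_eq_range' hf N).symm

private lemma sq_hasSum : HasSum (fun n : ℕ => (Real.sin n / n) ^ 2) ((π - 1) / 2) := by
  have hpi := Real.pi_gt_three
  have hpi0 : (π : ℝ) ≠ 0 := Real.pi_ne_zero
  have hx : (1 / π : ℝ) ∈ Set.Icc (0:ℝ) 1 := by
    constructor
    · positivity
    · rw [div_le_one Real.pi_pos]; linarith
  have hcos := hasSum_one_div_nat_pow_mul_cos (k := 1) one_ne_zero hx
  have hzeta := hasSum_zeta_nat (k := 1) one_ne_zero
  simp only [show (2*1:ℕ) = 2 from rfl] at hcos hzeta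
  have hb2 : (Polynomial.map (algebraMap ℚ ℝ) (Polynomial.bernoulli 2)).eval (1/π)
      = (1/π)^2 - (1/π) + 1/6 := by
    simp [Polynomial.bernoulli, Finset.sum_range_succ, bernoulli_zero, bernoulli_one, bern2]
    ring
  rw [hb2] at hcos
  rw [bern2] at hzeta
  have hcos' : HasSum (fun n : ℕ => 1 / (n:ℝ)^2 * Real.cos (2 * n)) (π^2/6 - π + 1) := by
    have e : (fun n : ℕ => 1/(n:ℝ)^2 * Real.cos (2*π*n*(1/π)))
        = fun n : ℕ => 1/(n:ℝ)^2 * Real.cos (2*n) := by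
      funext n
      rw [show 2*π*(n:ℝ)*(1/π) = 2*n by field_simp]
    rw [e] at hcos
    convert hcos using 1
    norm_num [Nat.factorial]
    field_simp
    ring
  have hzeta' : HasSum (fun n : ℕ => 1 / (n:ℝ)^2) (π^2/6) := by
    convert hzeta using 1
    norm_num [Nat.factorial]
    ring
  have h := (hzeta'.sub hcos').div_const 2
  have he : (fun n : ℕ => (1 / (n:ℝ)^2 - 1/(n:ℝ)^2 * Real.cos (2*n)) / 2)
      = fun n : ℕ => (Real.sin n / n) ^ 2 := by
    funext n
    rcases Nat.eq_zero_or_pos n with h0 | h0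
    · simp [h0]
    · have hn : (n:ℝ) ≠ 0 := Nat.cast_ne_zero.mpr h0.ne'
      have hs : Real.sin n ^ 2 = 1/2 - Real.cos (2*n)/2 := Real.sin_sq_eq_half_sub _
      field_simp
      rw [hs]
      ring
  rw [he] at h
  rw [show (π - 1) / 2 = (π ^ 2 / 6 - (π ^ 2 / 6 - π + 1)) / 2 by ring]
  exact h

private lemma sin_half_pos : 0 < Real.sin (1/2) :=
  Real.sin_pos_of_pos_of_lt_pi (by norm_num) (by linarith [Real.pi_gt_three])

private lemma sum_sin_eq (n : ℕ) :
    (∑ i ∈ range n, Real.sin ((i:ℝ) + 1)) * (2 * Real.sin (1/2))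
      = Real.cos (1/2) - Real.cos ((n:ℝ) + 1/2) := by
  induction n with
  | zero => simp
  | succ n ih =>
      rw [Finset.sum_range_succ, add_mul, ih]
      have key : Real.cos ((n:ℝ) + 1/2) - Real.cos ((n:ℝ) + 1 + 1/2)
          = Real.sin ((n:ℝ) + 1) * (2 * Real.sin (1/2)) := by
        rw [Real.cos_sub_cos]
        have e1 : (((n:ℝ) + 1/2) + ((n:ℝ) + 1 + 1/2)) / 2 = (n:ℝ) + 1 := by ring
        have e2 : (((n:ℝ) + 1/2) - ((n:ℝ) + 1 + 1/2)) / 2 = -(1/2 : ℝ) := by ring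
        rw [e1, e2, Real.sin_neg]
        ring
      push_cast
      push_cast at key
      linarith

private lemma sum_sin_bound (n : ℕ) :
    ‖∑ i ∈ range n, Real.sin ((i:ℝ) + 1)‖ ≤ 1 / Real.sin (1/2) := by
  have hs := sin_half_pos
  have heq : ∑ i ∈ range n, Real.sin ((i:ℝ) + 1)
      = (Real.cos (1/2) - Real.cos ((n:ℝ) + 1/2)) / (2 * Real.sin (1/2)) := by
    rw [eq_div_iff (by positivity)]
    exact sum_sin_eq n
  rw [heq, Real.norm_eq_abs, abs_div, abs_of_pos (by positivity : (0:ℝ) < 2 * Real.sin (1/2))]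
  have hnum : |Real.cos (1/2) - Real.cos ((n:ℝ) + 1/2)| ≤ 2 := by
    calc |Real.cos (1/2) - Real.cos ((n:ℝ) + 1/2)|
        ≤ |Real.cos (1/2)| + |Real.cos ((n:ℝ) + 1/2)| := abs_sub _ _
      _ ≤ 1 + 1 := add_le_add (Real.abs_cos_le_one _) (Real.abs_cos_le_one _)
      _ = 2 := by norm_num
  calc |Real.cos (1/2) - Real.cos ((n:ℝ) + 1/2)| / (2 * Real.sin (1/2))
      ≤ 2 / (2 * Real.sin (1/2)) := by gcongr
    _ = 1 / Real.sin (1/2) := by field_simp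

private lemma exists_limit :
    ∃ L : ℝ, Tendsto (fun N : ℕ => ∑ i ∈ range N, Real.sin i / i) atTop (𝓝 L) := by
  have hanti : Antitone (fun i : ℕ => 1 / ((i:ℝ) + 1)) := by
    intro a b hab
    apply one_div_le_one_div_of_le (by positivity)
    exact add_le_add_left (Nat.cast_le.mpr hab) 1
  have h0 : Tendsto (fun i : ℕ => 1 / ((i:ℝ) + 1)) atTop (𝓝 0) :=
    tendsto_one_div_add_atTop_nhds_zero_nat
  have hc := hanti.cauchySeq_series_mul_of_tendsto_zero_of_bounded h0
    (z := fun i : ℕ => Real.sin ((i:ℝ) + 1)) sum_sin_bound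
  obtain ⟨L, hL⟩ := cauchySeq_tendsto_of_complete hc
  refine ⟨L, ?_⟩
  have key : ∀ N : ℕ, ∑ i ∈ range (N + 1), Real.sin i / i
      = ∑ i ∈ range N, (1 / ((i:ℝ) + 1)) • Real.sin ((i:ℝ) + 1) := by
    intro N
    rw [Finset.sum_range_succ']
    push_cast
    simp [smul_eq_mul]
    apply Finset.sum_congr rfl
    intro i _
    ring
  have h2 : Tendsto (fun N : ℕ => ∑ i ∈ range (N+1), Real.sin i / i) atTop (𝓝 L) :=
    hL.congr fun N => (key N).symm
  exact (tendsto_add_atTop_iff_nat 1).mp h2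

private lemma norm_exp_I : ‖Complex.exp Complex.I‖ = 1 := by
  rw [Complex.norm_exp]
  simp

private lemma hasSum_abel (x : ℝ) (hx : x ∈ Set.Ioo (0:ℝ) 1) :
    HasSum (fun n : ℕ => Real.sin n / n * x ^ n)
      ((-(Complex.log (1 - x * Complex.exp Complex.I))).im) := by
  set z : ℂ := x * Complex.exp Complex.I with hz
  have hznorm : ‖z‖ < 1 := by
    rw [hz, norm_mul, norm_exp_I, mul_one, Complex.norm_real, Real.norm_eq_abs,
      abs_of_pos hx.1]
    exact hx.2
  have h := Complex.hasSum_taylorSeries_neg_log hznorm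
  have h2 := ((Complex.hasSum_iff _ _).mp h).2
  convert h2 using 2 with n
  show Real.sin n / n * x ^ n = (z ^ n / n).im
  have hzn : z ^ n = ((x ^ n : ℝ) : ℂ) * Complex.exp ((n : ℝ) * Complex.I) := by
    rw [hz, mul_pow, ← Complex.exp_nat_mul, Complex.ofReal_pow]
    norm_num
  rw [hzn]
  rw [show (((x ^ n : ℝ) : ℂ) * Complex.exp ((n:ℝ) * Complex.I) / (n:ℂ))
      = (((x ^ n : ℝ) : ℂ) * Complex.exp ((n:ℝ) * Complex.I) / ((n:ℝ):ℂ)) by norm_num]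
  rw [Complex.div_ofReal_im]
  have him : (((x ^ n : ℝ) : ℂ) * Complex.exp ((n:ℝ) * Complex.I)).im
      = x ^ n * Real.sin n := by
    rw [Complex.mul_im]
    have e : ((n:ℕ):ℂ) = (((n:ℕ):ℝ):ℂ) := by norm_cast
    simp only [← Complex.ofReal_pow, e, Complex.exp_ofReal_mul_I_im,
      Complex.exp_ofReal_mul_I_re, Complex.ofReal_re, Complex.ofReal_im]
    ring
  rw [him]
  ring

private lemma exp_I_re_im : Complex.exp Complex.I
    = ((Real.cos 1 : ℝ) : ℂ) + ((Real.sin 1 : ℝ) : ℂ) * Complex.I := by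
  have h : Complex.I = ((1:ℝ):ℂ) * Complex.I := by simp
  rw [h, Complex.exp_mul_I]
  simp [Complex.ofReal_cos, Complex.ofReal_sin]

private lemma value_eq : (-(Complex.log (1 - Complex.exp Complex.I))).im = (π - 1) / 2 := by
  have hs := sin_half_pos
  have harg : Complex.arg (1 - Complex.exp Complex.I) = (1 - π) / 2 := by
    have hw : (1 : ℂ) - Complex.exp Complex.I
        = ((2 * Real.sin (1/2) : ℝ) : ℂ) *
          (Complex.cos (((1 - π)/2 : ℝ) : ℂ) + Complex.sin (((1 - π)/2 : ℝ) : ℂ) * Complex.I) := by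
      rw [exp_I_re_im]
      rw [← Complex.ofReal_cos, ← Complex.ofReal_sin]
      have hre : 1 - Real.cos 1 = 2 * Real.sin (1/2) * Real.cos ((1 - π)/2) := by
        have h1 : Real.cos ((1 - π)/2) = Real.sin (1/2) := by
          rw [show ((1 - π)/2 : ℝ) = 1/2 - π/2 by ring, Real.cos_sub_pi_div_two]
        have h2 : Real.cos 1 = 2 * Real.cos (1/2)^2 - 1 := by
          rw [show (1:ℝ) = 2 * (1/2) by norm_num, Real.cos_two_mul]
          norm_num
        have h3 := Real.sin_sq_add_cos_sq (1/2 : ℝ)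
        rw [h1]
        nlinarith
      have him : -Real.sin 1 = 2 * Real.sin (1/2) * Real.sin ((1 - π)/2) := by
        have h1 : Real.sin ((1 - π)/2) = -Real.cos (1/2) := by
          rw [show ((1 - π)/2 : ℝ) = 1/2 - π/2 by ring, Real.sin_sub_pi_div_two]
        have h2 : Real.sin 1 = 2 * Real.sin (1/2) * Real.cos (1/2) := by
          rw [show (1:ℝ) = 2 * (1/2) by norm_num, Real.sin_two_mul]
          norm_num
        rw [h1, h2]
        ring
      apply Complex.ext
      · simp only [Complex.sub_re, Complex.one_re, Complex.add_re, Complex.ofReal_re,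
          Complex.mul_re, Complex.mul_im, Complex.I_re, Complex.I_im, Complex.ofReal_im,
          Complex.add_im, Complex.sub_im, Complex.one_im]
        ring_nf
        ring_nf at hre
        linarith [hre]
      · simp only [Complex.sub_re, Complex.one_re, Complex.add_re, Complex.ofReal_re,
          Complex.mul_re, Complex.mul_im, Complex.I_re, Complex.I_im, Complex.ofReal_im,
          Complex.add_im, Complex.sub_im, Complex.one_im]
        ring_nf
        ring_nf at him
        linarith [him]
    rw [hw]
    rw [Complex.arg_mul_cos_add_sin_mul_I (by positivity)]
    constructor
    · linarith [Real.pi_gt_three]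
    · linarith [Real.pi_gt_three]
  rw [Complex.neg_im, Complex.log_im, harg]
  ring

private lemma tendsto_g :
    Tendsto (fun x : ℝ => (-(Complex.log (1 - x * Complex.exp Complex.I))).im)
      (𝓝[<] (1:ℝ)) (𝓝 ((π - 1) / 2)) := by
  have hsin1 : 0 < Real.sin 1 :=
    Real.sin_pos_of_pos_of_lt_pi (by norm_num) (by linarith [Real.pi_gt_three])
  have him : ((1:ℂ) - Complex.exp Complex.I).im = -Real.sin 1 := by
    rw [Complex.sub_im, Complex.one_im, exp_I_re_im]
    simp only [Complex.add_im, Complex.ofReal_im, Complex.mul_im, Complex.ofReal_re,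
      Complex.I_im, Complex.I_re]
    ring
  have hmem : (1 : ℂ) - Complex.exp Complex.I ∈ Complex.slitPlane := by
    rw [Complex.mem_slitPlane_iff]
    right
    rw [him]
    linarith
  have hc1 : ContinuousAt (fun x : ℝ => (1:ℂ) - ↑x * Complex.exp Complex.I) 1 := by fun_prop
  have hc3 : ContinuousAt (fun x : ℝ => Complex.log (1 - ↑x * Complex.exp Complex.I)) 1 := by
    apply hc1.clog
    simp only [Complex.ofReal_one, one_mul]
    exact hmem
  have hcont : ContinuousAt
      (fun x : ℝ => (-(Complex.log (1 - x * Complex.exp Complex.I))).im) 1 :=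
    Complex.continuous_im.continuousAt.comp hc3.neg
  have hval : (fun x : ℝ => (-(Complex.log (1 - ↑x * Complex.exp Complex.I))).im) 1
      = (π - 1) / 2 := by
    simp only [Complex.ofReal_one, one_mul]
    exact value_eq
  rw [← hval]
  exact hcont.tendsto.mono_left nhdsWithin_le_nhds

theorem stmt2 : ∃ L : ℝ, Tendsto (fun N : ℕ => ∑ n ∈ Finset.Icc 1 N, Real.sin n / n) atTop (𝓝 (L)) ∧ Tendsto (fun N : ℕ => ∑ n ∈ Finset.Icc 1 N, (Real.sin n / n) ^ 2) atTop (𝓝 (L)) := by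
  obtain ⟨L, hL⟩ := exists_limit
  have habel := Real.tendsto_tsum_powerSeries_nhdsWithin_lt (f := fun n : ℕ => Real.sin n / n) hL
  have heq : ∀ᶠ x in 𝓝[<] (1:ℝ), (∑' n : ℕ, Real.sin n / n * x ^ n)
      = (-(Complex.log (1 - x * Complex.exp Complex.I))).im := by
    filter_upwards [Ioo_mem_nhdsLT_of_mem
      (show (1:ℝ) ∈ Set.Ioc (0:ℝ) 1 by constructor <;> norm_num)] with x hx
    exact (hasSum_abel x hx).tsum_eq
  have hLval : L = (π - 1) / 2 := tendsto_nhds_unique (habel.congr' heq) tendsto_g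
  refine ⟨(π - 1) / 2, ?_, ?_⟩
  · rw [← hLval]
    have hf0 : Real.sin (0:ℕ) / (0:ℕ) = 0 := by simp
    have h2 : Tendsto (fun N : ℕ => ∑ i ∈ range (N + 1), Real.sin i / i) atTop (𝓝 L) :=
      hL.comp (tendsto_add_atTop_nat 1)
    exact h2.congr fun N => (sum_Icc_eq_range' hf0 N).symm
  · exact tendsto_Icc_of_hasSum (by simp) sq_hasSum
end

section
/- The sum over n ≥ 1 of sin²(n)/n⁴ equals (π − 1)²/6. -/
open Real Filter Finset Topology

theorem stmt3 : Tendsto (fun N : ℕ => ∑ n ∈ Finset.Icc 1 N, Real.sin n ^ 2 / n ^ 4) atTop (𝓝 ((π - 1) ^ 2 / 6)) := by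
  have hπ : (0:ℝ) < π := Real.pi_pos
  have hx : (1/π : ℝ) ∈ Set.Icc (0:ℝ) 1 := by
    constructor
    · positivity
    · rw [div_le_one hπ]; linarith [Real.pi_gt_three]
  have hc := hasSum_one_div_nat_pow_mul_cos (k := 2) two_ne_zero hx
  have hz := hasSum_zeta_four
  have hB : (Polynomial.map (algebraMap ℚ ℝ) (Polynomial.bernoulli 4)).eval (1/π)
      = (1/π)^4 - 2*(1/π)^3 + (1/π)^2 - 1/30 := by
    simp only [Polynomial.eval_map, Polynomial.bernoulli, Polynomial.eval₂_finset_sum,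
      Finset.sum_range_succ, Polynomial.eval₂_monomial, bernoulli, Nat.choose]
    norm_num
    ring
  have key : HasSum (fun n : ℕ => Real.sin n ^ 2 / n ^ 4) ((π - 1) ^ 2 / 6) := by
    have h := (hz.div_const 2).sub (hc.div_const 2)
    convert h using 1
    · rfl
    · funext n
      rcases Nat.eq_zero_or_pos n with rfl | hn
      · simp
      · have hn' : (n:ℝ) ≠ 0 := Nat.cast_ne_zero.mpr hn.ne'
        have h2 : 2 * π * n * (1/π) = 2 * n := by field_simp
        rw [h2, Real.cos_two_mul, Real.sin_sq]
        field_simp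
        ring
    · simp only [show (2*2:ℕ) = 4 from rfl]
      rw [hB]
      norm_num [Nat.factorial]
      field_simp
      ring
  have hzero : Real.sin 0 ^ 2 / (0:ℕ) ^ 4 = 0 := by simp
  have heq : ∀ N : ℕ, ∑ n ∈ Finset.Icc 1 N, Real.sin n ^ 2 / n ^ 4
      = ∑ n ∈ Finset.range (N+1), Real.sin n ^ 2 / n ^ 4 := by
    intro N
    rw [Finset.range_eq_Ico, Finset.sum_eq_sum_Ico_succ_bot (Nat.succ_pos N),
      Nat.succ_eq_add_one, Finset.Ico_add_one_right_eq_Icc]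
    simp
  simp only [heq]
  exact key.tendsto_sum_nat.comp (tendsto_add_atTop_nat 1)
end

section
/- For every real x with 0 < x < 2π, the sum over n ≥ 1 of sin(nx)/n equals (π − x)/2. -/
open Real Filter Finset Topology

theorem stmt4 : ∀ x : ℝ, 0 < x → x < 2 * π → Tendsto (fun N : ℕ => ∑ n ∈ Finset.Icc 1 N, Real.sin (n * x) / n) atTop (𝓝 ((π - x) / 2)) := by
  intro x hx0 hx2
  have hπ : 0 < π := Real.pi_pos
  set z : ℂ := Complex.exp (x * Complex.I) with hz_def
  have hzne : z ≠ 1 := by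
    rw [hz_def, Ne, Complex.exp_eq_one_iff]
    rintro ⟨n, hn⟩
    have him := congrArg Complex.im hn
    set_option linter.unnecessarySimpa false in simp [Complex.mul_im] at him
    -- him : x = n * (2 * π) (hopefully)
    have hx : x = (n : ℝ) * (2 * π) := by linarith [him]
    have hn0 : (0:ℝ) < (n:ℝ) := by nlinarith
    have hn1 : (1:ℝ) ≤ (n:ℝ) := by exact_mod_cast (by exact_mod_cast hn0 : (0:ℤ) < n)
    nlinarith
  have hznorm : ‖z‖ = 1 := by
    rw [hz_def]
    exact Complex.norm_exp_ofReal_mul_I x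
  set f : ℕ → ℂ := fun n => z ^ n / n with hf_def
  have hf0 : f 0 = 0 := by simp [hf_def]
  have hbound : ∀ n : ℕ, ‖∑ i ∈ range n, z ^ (i + 1)‖ ≤ 2 / ‖z - 1‖ := by
    intro n
    have h1 : z - 1 ≠ 0 := sub_ne_zero.mpr hzne
    have hEq : ∑ i ∈ range n, z ^ (i + 1) = z * ((z ^ n - 1) / (z - 1)) := by
      rw [← geom_sum_eq hzne, Finset.mul_sum]
      exact Finset.sum_congr rfl fun i _ => by ring
    rw [hEq, norm_mul, norm_div, hznorm, one_mul]
    gcongr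
    calc ‖z ^ n - 1‖ ≤ ‖z ^ n‖ + ‖(1:ℂ)‖ := norm_sub_le _ _
    _ = 2 := by rw [norm_pow, hznorm]; norm_num
  have hcauchy : CauchySeq (fun n => ∑ i ∈ range n, f i) := by
    have hanti : Antitone (fun n : ℕ => (1 : ℝ) / (n + 1)) := by
      intro a b hab
      apply one_div_le_one_div_of_le (by positivity)
      exact_mod_cast Nat.succ_le_succ hab
    have htend : Tendsto (fun n : ℕ => (1 : ℝ) / (n + 1)) atTop (𝓝 0) :=
      tendsto_one_div_add_atTop_nhds_zero_nat
    have hc := hanti.cauchySeq_series_mul_of_tendsto_zero_of_bounded htend hbound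
    have heq : (fun n => ∑ i ∈ range n, ((1 : ℝ) / (i + 1)) • z ^ (i + 1))
        = fun n => ∑ i ∈ range n, f (i + 1) := by
      funext n
      refine Finset.sum_congr rfl fun i _ => ?_
      rw [hf_def, Complex.real_smul]
      push_cast
      ring
    rw [heq] at hc
    rw [← cauchySeq_shift 1]
    convert hc using 2 with n
    rw [Finset.sum_range_succ']
    simp [hf0]
  obtain ⟨l, hl⟩ := cauchySeq_tendsto_of_complete hcauchy
  have habel : Tendsto (fun r : ℝ => ∑' n, f n * (r : ℂ) ^ n) (𝓝[<] (1:ℝ)) (𝓝 l) := by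
    have := Complex.tendsto_tsum_powerSeries_nhdsWithin_lt hl
    rwa [tendsto_map'_iff] at this
  have hre : (0:ℝ) < (1 - z).re := by
    have h1 : (1 - z).re = 1 - Real.cos x := by
      simp [hz_def, Complex.exp_ofReal_mul_I_re]
    rw [h1]
    have hcos : Real.cos x < 1 := by
      rcases lt_or_ge x π with h | h
      · calc Real.cos x < Real.cos 0 :=
              Real.cos_lt_cos_of_nonneg_of_le_pi le_rfl h.le hx0
        _ = 1 := Real.cos_zero
      · rcases eq_or_lt_of_le h with rfl | h
        · rw [Real.cos_pi]; norm_num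
        · rw [show x = 2*π - (2*π - x) by ring, Real.cos_two_pi_sub]
          calc Real.cos (2*π - x) < Real.cos 0 :=
                Real.cos_lt_cos_of_nonneg_of_le_pi le_rfl (by linarith) (by linarith)
          _ = 1 := Real.cos_zero
    linarith
  have hlog_cont : Tendsto (fun r : ℝ => -Complex.log (1 - (r : ℂ) * z)) (𝓝[<] (1:ℝ))
      (𝓝 (-Complex.log (1 - z))) := by
    apply Tendsto.mono_left ?_ nhdsWithin_le_nhds
    apply Tendsto.neg
    have hcont : ContinuousAt Complex.log (1 - z) :=
      continuousAt_clog (Complex.mem_slitPlane_iff.mpr (Or.inl hre))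
    apply hcont.tendsto.comp
    have hc : Continuous (fun r : ℝ => 1 - (r : ℂ) * z) := by continuity
    simpa using hc.tendsto 1
  have heq' : ∀ᶠ r : ℝ in 𝓝[<] (1:ℝ),
      (∑' n, f n * (r : ℂ) ^ n) = -Complex.log (1 - (r:ℂ) * z) := by
    filter_upwards [Ioo_mem_nhdsLT_of_mem
      (Set.mem_Ioc.mpr ⟨by norm_num, le_refl (1:ℝ)⟩ : (1:ℝ) ∈ Set.Ioc (-1:ℝ) 1)] with r hr
    have hrz : ‖(r:ℂ) * z‖ < 1 := by
      rw [norm_mul, hznorm, mul_one, Complex.norm_real, Real.norm_eq_abs, abs_lt]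
      exact ⟨hr.1, hr.2⟩
    have hs := Complex.hasSum_taylorSeries_neg_log hrz
    rw [← hs.tsum_eq]
    apply tsum_congr
    intro n
    rw [hf_def, mul_pow]
    ring
  have hlval : l = -Complex.log (1 - z) :=
    tendsto_nhds_unique habel (hlog_cont.congr' (heq'.mono fun r hr => hr.symm))
  have hθ : (x - π)/2 ∈ Set.Ioc (-π) π := ⟨by linarith, by linarith⟩
  have hs2 : 0 < Real.sin (x/2) := Real.sin_pos_of_pos_of_lt_pi (by linarith) (by linarith)
  have hsq : Real.sin (x/2)^2 = (1 - Real.cos x)/2 := by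
    have h1 := Real.cos_sq (x/2)
    have h2 := Real.sin_sq_add_cos_sq (x/2)
    rw [show 2*(x/2) = x by ring] at h1
    nlinarith
  have hkey : (1 : ℂ) - z = ((2 * Real.sin (x/2) : ℝ) : ℂ) *
      (Complex.cos (((x - π)/2 : ℝ)) + Complex.sin (((x - π)/2 : ℝ)) * Complex.I) := by
    rw [hz_def]
    apply Complex.ext
    · simp only [Complex.sub_re, Complex.one_re, Complex.exp_ofReal_mul_I_re,
        Complex.mul_re, Complex.add_re, Complex.add_im, Complex.mul_im,
        Complex.ofReal_re, Complex.ofReal_im, Complex.I_re, Complex.I_im,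
        ← Complex.ofReal_cos, ← Complex.ofReal_sin]
      have h1 : Real.cos ((x - π)/2) = Real.sin (x/2) := by
        rw [show (x - π)/2 = x/2 - π/2 by ring, Real.cos_sub_pi_div_two]
      rw [h1]; nlinarith [hsq]
    · simp only [Complex.sub_im, Complex.one_im, Complex.exp_ofReal_mul_I_im,
        Complex.mul_im, Complex.add_re, Complex.add_im, Complex.mul_re,
        Complex.ofReal_re, Complex.ofReal_im, Complex.I_re, Complex.I_im,
        ← Complex.ofReal_cos, ← Complex.ofReal_sin]
      have h3 : Real.sin ((x - π)/2) = -Real.cos (x/2) := by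
        rw [show (x - π)/2 = x/2 - π/2 by ring, Real.sin_sub_pi_div_two]
      have h4 : Real.sin x = 2 * Real.sin (x/2) * Real.cos (x/2) := by
        rw [show x = 2 * (x/2) by ring, Real.sin_two_mul]; ring_nf
      rw [h3]; nlinarith [h4]
  have harg : (1 - z).arg = (x - π)/2 := by
    rw [hkey, Complex.arg_real_mul _ (by positivity), Complex.arg_cos_add_sin_mul_I hθ]
  have hlim : l.im = (π - x)/2 := by
    rw [hlval, Complex.neg_im, Complex.log_im, harg]; ring
  have hfim : ∀ n : ℕ, (f n).im = Real.sin (n * x) / n := by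
    intro n
    rcases Nat.eq_zero_or_pos n with rfl | hn
    · simp [hf0]
    have hzn : z ^ n = Complex.exp (((n * x : ℝ) : ℂ) * Complex.I) := by
      rw [hz_def, ← Complex.exp_nat_mul]
      push_cast; ring_nf
    rw [hf_def]
    simp only
    rw [hzn, Complex.div_natCast_im, Complex.exp_ofReal_mul_I_im]
  have hfinal : Tendsto (fun N : ℕ => (∑ i ∈ range (N+1), f i).im) atTop (𝓝 l.im) :=
    (Complex.continuous_im.tendsto l).comp (hl.comp (tendsto_add_atTop_nat 1))
  rw [← hlim]
  convert hfinal using 1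
  funext N
  rw [Complex.im_sum, Finset.sum_range_succ']
  simp only [hfim, hf0, Complex.zero_im, add_zero, Nat.cast_zero]
  rw [← Finset.Ico_add_one_right_eq_Icc, Finset.sum_Ico_eq_sum_range]
  refine Finset.sum_congr rfl fun i _ => ?_
  rw [add_comm 1 i]
end

section
/- For every real x with 1 ≤ x ≤ 2π − 1, the sum over n ≥ 1 of sin(n)·sin(nx)/n² equals (π − x)/2. -/
open Real Filter Finset Topology

lemma bern2_eval (t : ℝ) :
    (Polynomial.map (algebraMap ℚ ℝ) (Polynomial.bernoulli 2)).eval t = t^2 - t + 1/6 := by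
  simp [Polynomial.bernoulli, Finset.sum_range_succ,
    bernoulli_eq_bernoulli'_of_ne_one, bernoulli'_two]
  ring

lemma hasSum_cos_aux (θ : ℝ) (h0 : 0 ≤ θ) (h2 : θ ≤ 2 * π) :
    HasSum (fun n : ℕ => 1 / (n : ℝ) ^ 2 * Real.cos (n * θ))
      (π ^ 2 / 6 - π * θ / 2 + θ ^ 2 / 4) := by
  have hπ : (0:ℝ) < π := Real.pi_pos
  have h2π : (0:ℝ) < 2 * π := by linarith
  have hx : θ / (2 * π) ∈ Set.Icc (0:ℝ) 1 := by
    constructor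
    · positivity
    · rw [div_le_one h2π]; exact h2
  have H := hasSum_one_div_nat_pow_mul_cos (k := 1) one_ne_zero hx
  have hne : (2 * π) ≠ 0 := ne_of_gt h2π
  convert H using 1
  · funext n
    rw [show 2 * π * (n:ℝ) * (θ / (2 * π)) = n * θ by field_simp]
  · rw [show (2 * 1 : ℕ) = 2 from rfl, bern2_eval]
    simp [Nat.factorial]
    field_simp
    ring

theorem stmt5 : ∀ x : ℝ, 1 ≤ x → x ≤ 2 * π - 1 → Tendsto (fun N : ℕ => ∑ n ∈ Finset.Icc 1 N, Real.sin n * Real.sin (n * x) / n ^ 2) atTop (𝓝 ((π - x) / 2)) := by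
  intro x hx1 hx2
  have hπ : (0:ℝ) < π := Real.pi_pos
  have H1 := hasSum_cos_aux (x - 1) (by linarith) (by linarith)
  have H2 := hasSum_cos_aux (x + 1) (by linarith) (by linarith)
  have H := (H1.sub H2).div_const 2
  have hfun : ∀ n : ℕ, (1 / (n : ℝ) ^ 2 * Real.cos (n * (x - 1)) -
      1 / (n : ℝ) ^ 2 * Real.cos (n * (x + 1))) / 2 = Real.sin n * Real.sin (n * x) / n ^ 2 := by
    intro n
    have e1 : (n : ℝ) * (x - 1) = n * x - n := by ring
    have e2 : (n : ℝ) * (x + 1) = n * x + n := by ring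
    rw [e1, e2, Real.cos_sub, Real.cos_add]
    ring
  have hval : (π ^ 2 / 6 - π * (x - 1) / 2 + (x - 1) ^ 2 / 4 -
      (π ^ 2 / 6 - π * (x + 1) / 2 + (x + 1) ^ 2 / 4)) / 2 = (π - x) / 2 := by ring
  rw [hval] at H
  simp only [hfun] at H
  have key : ∀ N : ℕ, ∑ n ∈ Finset.range (N + 1), Real.sin n * Real.sin (n * x) / (n : ℝ) ^ 2
      = ∑ n ∈ Finset.Icc 1 N, Real.sin n * Real.sin (n * x) / (n : ℝ) ^ 2 := by
    intro N
    rw [Finset.range_eq_Ico, Finset.sum_eq_sum_Ico_succ_bot (Nat.succ_pos N),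
      Nat.succ_eq_add_one, Finset.Ico_add_one_right_eq_Icc]
    simp
  have T := H.tendsto_sum_nat.comp (tendsto_add_atTop_nat 1)
  exact T.congr fun N => key N
end

section
/- For every real x with 1 ≤ x ≤ π − 1, the sum over n ≥ 1 of sin(2nx)/(2n) equals (π − 2x)/4, and the sum over n ≥ 1 of sin(2n)·sin(2nx)/(2n)² equals (π − 2x)/4. -/
open Real Filter Finset Topology

lemma sum_Icc_one (f : ℕ → ℝ) (h0 : f 0 = 0) (N : ℕ) :
    ∑ n ∈ Finset.Icc 1 N, f n = ∑ n ∈ Finset.range (N + 1), f n := by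
  induction N with
  | zero => simp [h0]
  | succ N ih =>
      rw [Finset.sum_Icc_succ_top (by omega : 1 ≤ N + 1), ih]
      simp [Finset.sum_range_succ]

lemma bern2val : bernoulli 2 = 1/6 := by
  rw [bernoulli_eq_bernoulli'_of_ne_one (by norm_num), bernoulli'_two]

lemma bern2_s8 (y : ℝ) : (Polynomial.map (algebraMap ℚ ℝ) (Polynomial.bernoulli 2)).eval y
    = y^2 - y + 1/6 := by
  simp [Polynomial.bernoulli, Finset.sum_range_succ, bern2val]
  ring

lemma cos_series {y : ℝ} (hy : y ∈ Set.Icc (0:ℝ) 1) :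
    HasSum (fun n : ℕ => 1 / (n : ℝ) ^ 2 * Real.cos (2 * π * n * y))
      (π ^ 2 * (y ^ 2 - y + 1 / 6)) := by
  have := hasSum_one_div_nat_pow_mul_cos (k := 1) one_ne_zero hy
  rw [bern2_s8] at this
  convert this using 2
  norm_num [Nat.factorial]
  ring

lemma part2 (x : ℝ) (h1x : 1 ≤ x) (h2x : x ≤ π - 1) :
    HasSum (fun n : ℕ => Real.sin (2 * n) * Real.sin (2 * n * x) / (2 * n) ^ 2)
      ((π - 2 * x) / 4) := by
  have hπ := Real.pi_gt_three
  have hπ0 : (0:ℝ) < π := by linarith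
  have hy1 : (x - 1) / π ∈ Set.Icc (0:ℝ) 1 :=
    ⟨div_nonneg (by linarith) hπ0.le, by rw [div_le_one hπ0]; linarith⟩
  have hy2 : (x + 1) / π ∈ Set.Icc (0:ℝ) 1 :=
    ⟨div_nonneg (by linarith) hπ0.le, by rw [div_le_one hπ0]; linarith⟩
  have A := cos_series hy1
  have B := cos_series hy2
  have A' : HasSum (fun n : ℕ => 1 / (n : ℝ) ^ 2 * Real.cos (2 * n * (x - 1)))
      (π ^ 2 * (((x-1)/π) ^ 2 - (x-1)/π + 1 / 6)) := by
    convert A using 3 with n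
    congr 1
    field_simp
  have B' : HasSum (fun n : ℕ => 1 / (n : ℝ) ^ 2 * Real.cos (2 * n * (x + 1)))
      (π ^ 2 * (((x+1)/π) ^ 2 - (x+1)/π + 1 / 6)) := by
    convert B using 3 with n
    congr 1
    field_simp
  have C := (A'.sub B').div_const 8
  have hfun : ∀ n : ℕ, Real.sin (2 * n) * Real.sin (2 * n * x) / (2 * n) ^ 2
      = (1 / (n : ℝ) ^ 2 * Real.cos (2 * n * (x - 1))
        - 1 / (n : ℝ) ^ 2 * Real.cos (2 * n * (x + 1))) / 8 := by
    intro n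
    have key : Real.cos (2 * n * (x - 1)) - Real.cos (2 * n * (x + 1))
        = 2 * Real.sin (2 * n) * Real.sin (2 * n * x) := by
      rw [Real.cos_sub_cos,
        show (2 * (n:ℝ) * (x - 1) + 2 * n * (x + 1)) / 2 = 2 * n * x by ring,
        show (2 * (n:ℝ) * (x - 1) - 2 * n * (x + 1)) / 2 = -(2 * n) by ring,
        Real.sin_neg]
      ring
    rw [show 1 / (n : ℝ) ^ 2 * Real.cos (2 * n * (x - 1))
        - 1 / (n : ℝ) ^ 2 * Real.cos (2 * n * (x + 1))
        = (Real.cos (2 * n * (x - 1)) - Real.cos (2 * n * (x + 1))) / n ^ 2 by ring, key]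
    rcases Nat.eq_zero_or_pos n with rfl | hn
    · norm_num
    · have hn' : (n : ℝ) ≠ 0 := Nat.cast_ne_zero.mpr hn.ne'
      field_simp
      ring
  have hval : (π ^ 2 * (((x-1)/π) ^ 2 - (x-1)/π + 1 / 6)
      - π ^ 2 * (((x+1)/π) ^ 2 - (x+1)/π + 1 / 6)) / 8 = (π - 2 * x) / 4 := by
    field_simp
    ring
  rw [hval] at C
  simpa only [hfun] using C

section
open Complex

lemma conv_zn {z : ℂ} (hz : ‖z‖ = 1) (hz1 : z ≠ 1) :
    ∃ l : ℂ, Tendsto (fun N : ℕ => ∑ n ∈ Finset.range N, z ^ n / n) atTop (𝓝 l) := by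
  have hd : (0:ℝ) < ‖z - 1‖ := by
    rw [norm_pos_iff]; exact sub_ne_zero.mpr hz1
  have hb : ∀ n : ℕ, ‖∑ i ∈ Finset.range n, z ^ (i + 1)‖ ≤ 2 / ‖z - 1‖ := by
    intro n
    have he : ∑ i ∈ Finset.range n, z ^ (i+1) = z * ((z ^ n - 1) / (z - 1)) := by
      rw [← geom_sum_eq hz1, Finset.mul_sum]
      exact Finset.sum_congr rfl fun i _ => by ring
    rw [he, norm_mul, hz, one_mul, norm_div]
    gcongr
    calc ‖z ^ n - 1‖ ≤ ‖z ^ n‖ + ‖(1:ℂ)‖ := norm_sub_le _ _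
      _ = 2 := by rw [norm_pow, hz, one_pow, norm_one]; norm_num
  -- Dirichlet test
  have hanti : Antitone (fun n : ℕ => 1 / ((n:ℝ) + 1)) := by
    intro a b hab
    apply one_div_le_one_div_of_le (by positivity)
    exact_mod_cast by omega
  have h0 : Tendsto (fun n : ℕ => 1 / ((n:ℝ) + 1)) atTop (𝓝 0) :=
    tendsto_one_div_add_atTop_nhds_zero_nat
  have hcauchy := hanti.cauchySeq_series_mul_of_tendsto_zero_of_bounded h0 hb
  obtain ⟨l, hl⟩ := cauchySeq_tendsto_of_complete hcauchy
  refine ⟨l, ?_⟩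
  rw [← tendsto_add_atTop_iff_nat 1]
  have heq : ∀ N : ℕ, ∑ n ∈ Finset.range (N + 1), z ^ n / n
      = ∑ i ∈ Finset.range N, (1 / ((i:ℝ) + 1)) • z ^ (i + 1) := by
    intro N
    rw [Finset.sum_range_succ']
    simp only [Nat.cast_zero, div_zero, add_zero, pow_zero]
    refine Finset.sum_congr rfl fun i _ => ?_
    rw [Complex.real_smul]
    push_cast
    rw [div_mul_eq_mul_div, one_mul]
  simpa only [heq] using hl

lemma slit_mem {z : ℂ} (hz : ‖z‖ = 1) (hz1 : z ≠ 1) : 1 - z ∈ Complex.slitPlane := by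
  left
  simp only [Complex.sub_re, Complex.one_re, sub_pos]
  by_contra h
  push_neg at h
  have h1 : z.re ≤ 1 := by
    calc z.re ≤ |z.re| := le_abs_self _
      _ ≤ ‖z‖ := Complex.abs_re_le_norm z
      _ = 1 := hz
  have hre : z.re = 1 := le_antisymm h1 h
  have habs : ‖z‖ ^ 2 = 1 := by rw [hz]; norm_num
  rw [Complex.sq_norm, Complex.normSq_apply, hre] at habs
  have him : z.im = 0 := by nlinarith [sq_nonneg z.im]
  exact hz1 (Complex.ext hre him)

lemma limit_val {z : ℂ} (hz : ‖z‖ = 1) (hz1 : z ≠ 1) {l : ℂ}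
    (hl : Tendsto (fun N : ℕ => ∑ n ∈ Finset.range N, z ^ n / n) atTop (𝓝 l)) :
    l = -Complex.log (1 - z) := by
  have habel := Complex.tendsto_tsum_powerSeries_nhdsWithin_lt hl
  rw [tendsto_map'_iff] at habel
  have hev : ∀ᶠ r in 𝓝[<] (1:ℝ),
      ((fun w : ℂ => ∑' n : ℕ, z ^ n / n * w ^ n) ∘ Complex.ofReal) r
        = -Complex.log (1 - r * z) := by
    have h1 : ∀ᶠ r in 𝓝[<] (1:ℝ), r < 1 := eventually_mem_nhdsWithin
    have h2 : ∀ᶠ r in 𝓝[<] (1:ℝ), (-1:ℝ) < r :=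
      eventually_nhdsWithin_of_eventually_nhds (eventually_gt_nhds (by norm_num))
    filter_upwards [h1, h2] with r hr1 hr2
    have hr : ‖(r:ℂ) * z‖ < 1 := by
      rw [norm_mul, hz, mul_one, Complex.norm_real, Real.norm_eq_abs, abs_lt]
      exact ⟨hr2, hr1⟩
    have hs := Complex.hasSum_taylorSeries_neg_log hr
    rw [Function.comp_apply, ← hs.tsum_eq]
    refine tsum_congr fun n => ?_
    rw [mul_pow]
    ring
  have hcont : Tendsto (fun r : ℝ => -Complex.log (1 - r * z)) (𝓝[<] (1:ℝ))
      (𝓝 (-Complex.log (1 - z))) := by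
    have h1 : Tendsto (fun r : ℝ => 1 - (r:ℂ) * z) (𝓝 (1:ℝ)) (𝓝 (1 - z)) := by
      have := ((Complex.continuous_ofReal.tendsto 1).mul_const z).const_sub 1
      simpa using this
    have hc : ContinuousAt Complex.log (1 - z) := continuousAt_clog (slit_mem hz hz1)
    exact ((hc.tendsto.comp h1).neg).mono_left nhdsWithin_le_nhds
  exact tendsto_nhds_unique (habel.congr' hev) hcont

lemma im_neg_log {θ : ℝ} (h0 : 0 < θ) (h2 : θ < 2 * π) :
    (-Complex.log (1 - Complex.exp (θ * Complex.I))).im = (π - θ) / 2 := by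
  have hπ := Real.pi_pos
  have hsin : 0 < Real.sin (θ / 2) :=
    Real.sin_pos_of_pos_of_lt_pi (by linarith) (by linarith)
  have hre : Real.cos ((θ - π)/2) = Real.sin (θ/2) := by
    rw [show ((θ:ℝ) - π)/2 = θ/2 - π/2 by ring, Real.cos_sub_pi_div_two]
  have him : Real.sin ((θ - π)/2) = -Real.cos (θ/2) := by
    rw [show ((θ:ℝ) - π)/2 = θ/2 - π/2 by ring, Real.sin_sub_pi_div_two]
  have key : 1 - Complex.exp (θ * Complex.I)
      = (2 * Real.sin (θ / 2) : ℝ) *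
        (Complex.cos ((θ - π)/2 : ℝ) + Complex.sin ((θ - π)/2 : ℝ) * Complex.I) := by
    apply Complex.ext <;>
      simp only [Complex.sub_re, Complex.sub_im, Complex.one_re, Complex.one_im,
        Complex.exp_ofReal_mul_I_re, Complex.exp_ofReal_mul_I_im,
        Complex.mul_re, Complex.mul_im, Complex.add_re, Complex.add_im,
        Complex.ofReal_re, Complex.ofReal_im, Complex.I_re, Complex.I_im,
        Complex.cos_ofReal_re, Complex.cos_ofReal_im, Complex.sin_ofReal_re,
        Complex.sin_ofReal_im, hre, him]
    · have hpy := Real.sin_sq_add_cos_sq (θ/2)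
      have hcos := Real.cos_two_mul (θ/2)
      rw [show 2 * (θ/2) = θ by ring] at hcos
      nlinarith
    · have := Real.sin_two_mul (θ/2)
      rw [show 2 * (θ/2) = θ by ring] at this
      nlinarith
  rw [Complex.neg_im, Complex.log_im, key,
    Complex.arg_mul_cos_add_sin_mul_I (by positivity)
      ⟨by linarith, by linarith⟩]
  ring

end

lemma part1 (x : ℝ) (h1x : 1 ≤ x) (h2x : x ≤ π - 1) :
    Tendsto (fun N : ℕ => ∑ n ∈ Finset.Icc 1 N, Real.sin (2 * n * x) / (2 * n)) atTop
      (𝓝 ((π - 2 * x) / 4)) := by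
  have hπ := Real.pi_gt_three
  set θ : ℝ := 2 * x with hθdef
  have hθ0 : 0 < θ := by simp only [hθdef]; linarith
  have hθ2 : θ < 2 * π := by simp only [hθdef]; linarith
  set z : ℂ := Complex.exp (θ * Complex.I) with hzdef
  have hznorm : ‖z‖ = 1 := by
    rw [hzdef]; exact Complex.norm_exp_ofReal_mul_I θ
  have hz1 : z ≠ 1 := by
    rw [hzdef, Ne, Complex.exp_eq_one_iff]
    rintro ⟨n, hn⟩
    have hθn : θ = n * (2 * π) := by
      have := congrArg Complex.im hn
      simpa using this
    have h0n : (0:ℝ) < n * (2 * π) := hθn ▸ hθ0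
    have h1n : (n:ℝ) * (2 * π) < 1 * (2 * π) := by rw [one_mul]; exact hθn ▸ hθ2
    have hn0 : 0 < n := by
      by_contra h
      push_neg at h
      have : (n:ℝ) ≤ 0 := by exact_mod_cast h
      nlinarith
    have hn1 : (n:ℝ) < 1 := lt_of_mul_lt_mul_right h1n (by positivity)
    have : n < 1 := by exact_mod_cast hn1
    omega
  obtain ⟨l, hl⟩ := conv_zn hznorm hz1
  have him : l.im = (π - θ) / 2 := by
    rw [limit_val hznorm hz1 hl, hzdef]
    exact im_neg_log hθ0 hθ2
  have hterm : ∀ n : ℕ, Real.sin (2 * n * x) / (2 * n) = (z ^ n / n).im / 2 := by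
    intro n
    have hzn : z ^ n = Complex.exp (((n * θ : ℝ) : ℂ) * Complex.I) := by
      rw [hzdef, ← Complex.exp_nat_mul]
      congr 1
      push_cast
      ring
    rw [hzn, show ((n:ℂ)) = ((n:ℝ):ℂ) by push_cast; rfl, Complex.div_ofReal_im,
      Complex.exp_ofReal_mul_I_im, show (n:ℝ) * θ = 2 * n * x by rw [hθdef]; ring,
      div_div, mul_comm 2 (n:ℝ)]
  have hf0 : Real.sin (2 * (0:ℕ) * x) / (2 * (0:ℕ)) = 0 := by norm_num
  have hsum : ∀ N : ℕ, ∑ n ∈ Finset.Icc 1 N, Real.sin (2 * n * x) / (2 * n)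
      = (∑ n ∈ Finset.range (N + 1), z ^ n / n).im / 2 := by
    intro N
    rw [sum_Icc_one _ hf0 N, Complex.im_sum, Finset.sum_div]
    exact Finset.sum_congr rfl fun n _ => hterm n
  have htend : Tendsto (fun N : ℕ => (∑ n ∈ Finset.range (N + 1), z ^ n / n).im / 2)
      atTop (𝓝 (l.im / 2)) :=
    (((Complex.continuous_im.tendsto l).comp hl).div_const 2).comp (tendsto_add_atTop_nat 1)
  have hval : l.im / 2 = (π - 2 * x) / 4 := by rw [him, hθdef]; ring
  rw [hval] at htend
  exact htend.congr fun N => (hsum N).symm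

theorem stmt8 : ∀ x : ℝ, 1 ≤ x → x ≤ π - 1 →
    (Tendsto (fun N : ℕ => ∑ n ∈ Finset.Icc 1 N, Real.sin (2 * n * x) / (2 * n)) atTop (𝓝 ((π - 2 * x) / 4))) ∧
    (Tendsto (fun N : ℕ => ∑ n ∈ Finset.Icc 1 N, Real.sin (2 * n) * Real.sin (2 * n * x) / (2 * n) ^ 2) atTop (𝓝 ((π - 2 * x) / 4))) := by
  intro x h1 h2
  refine ⟨part1 x h1 h2, ?_⟩
  have h := part2 x h1 h2
  have hf0 : Real.sin (2 * (0:ℕ)) * Real.sin (2 * (0:ℕ) * x) / (2 * (0:ℕ)) ^ 2 = 0 := by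
    norm_num
  have ht := (h.tendsto_sum_nat).comp (tendsto_add_atTop_nat 1)
  exact ht.congr fun N => (sum_Icc_one _ hf0 N).symm
end

section
/- ∑_{n=1}^∞ sin(2n)/(2n) = ∑_{n=1}^∞ (sin(2n)/(2n))² = (π − 2)/4. -/
open Real Filter Finset Topology

lemma h2pi : (2:ℝ) ≤ π := by linarith [Real.pi_gt_three]

lemma sinhalf_pos {t : ℝ} (h1 : 2 ≤ t) (h2 : t ≤ π) : 0 < Real.sin (t/2) :=
  Real.sin_pos_of_pos_of_lt_pi (by linarith) (by linarith [Real.pi_pos])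

lemma sin1_pos : 0 < Real.sin 1 :=
  Real.sin_pos_of_pos_of_lt_pi one_pos (by linarith [Real.pi_gt_three])

lemma sin1_le {t : ℝ} (h1 : 2 ≤ t) (h2 : t ≤ π) : Real.sin 1 ≤ Real.sin (t/2) := by
  have hpi := Real.pi_gt_three
  apply Real.strictMonoOn_sin.monotoneOn
  · constructor <;> [linarith; linarith]
  · constructor <;> [linarith; linarith]
  · linarith

lemma telesc (t : ℝ) (N : ℕ) :
    2 * Real.sin (t/2) * ∑ n ∈ Finset.Icc 1 N, Real.cos (n * t)
      = Real.sin ((N + 1/2) * t) - Real.sin (t/2) := by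
  induction N with
  | zero => norm_num [show (1:ℝ)/2 * t = t/2 by ring]
  | succ N ih =>
    rw [Finset.sum_Icc_succ_top (by omega : 1 ≤ N + 1), mul_add, ih]
    push_cast
    rw [show ((N:ℝ) + 1 + 1/2) * t = ((N:ℝ)+1)*t + t/2 by ring,
        show ((N:ℝ) + 1/2) * t = ((N:ℝ)+1)*t - t/2 by ring,
        Real.sin_add, Real.sin_sub]
    ring

lemma intB (n : ℕ) (hn : 1 ≤ n) :
    ∫ t in (2:ℝ)..π, Real.cos (n * t) = - (Real.sin (2*n) / n) := by
  have hn' : (n:ℝ) ≠ 0 := by positivity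
  rw [intervalIntegral.integral_comp_mul_left (fun x => Real.cos x) hn',
      integral_cos, Real.sin_nat_mul_pi]
  simp only [smul_eq_mul, zero_sub]
  field_simp [mul_comm]

lemma contOn (c : ℝ) : ContinuousOn (fun t => Real.sin (c * t) / (2 * Real.sin (t/2))) (Set.Icc 2 π) := by
  apply ContinuousOn.div
  · exact (Real.continuous_sin.comp (continuous_const.mul continuous_id)).continuousOn
  · exact (continuous_const.mul (Real.continuous_sin.comp (continuous_id.div_const 2))).continuousOn
  · intro t ht
    have := sinhalf_pos ht.1 ht.2
    positivity

lemma keyid (N : ℕ) :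
    ∑ n ∈ Finset.Icc 1 N, Real.sin (2*n) / n
      = (π - 2)/2 - ∫ t in (2:ℝ)..π, Real.sin (((N:ℝ) + 1/2) * t) / (2 * Real.sin (t/2)) := by
  have huIcc : Set.uIcc (2:ℝ) π = Set.Icc 2 π := Set.uIcc_of_le h2pi
  have hint : (∫ t in (2:ℝ)..π, (∑ n ∈ Finset.Icc 1 N, Real.cos (n*t)))
      = - ∑ n ∈ Finset.Icc 1 N, Real.sin (2*n)/n := by
    have hs := intervalIntegral.integral_finset_sum (μ := MeasureTheory.volume) (a := (2:ℝ))
      (b := π) (s := Finset.Icc 1 N) (f := fun (n : ℕ) (t : ℝ) => Real.cos (n*t))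
      (fun i _ => ((by fun_prop : Continuous fun t : ℝ => Real.cos (i * t)).intervalIntegrable _ _))
    rw [hs, Finset.sum_congr rfl (fun n hn => intB n (Finset.mem_Icc.mp hn).1),
      Finset.sum_neg_distrib]
  have heq : (∫ t in (2:ℝ)..π, (∑ n ∈ Finset.Icc 1 N, Real.cos (n*t)))
      = (∫ t in (2:ℝ)..π, (Real.sin (((N:ℝ) + 1/2) * t) / (2 * Real.sin (t/2)) - 1/2)) := by
    apply intervalIntegral.integral_congr
    intro t ht
    rw [huIcc] at ht
    have hs := sinhalf_pos ht.1 ht.2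
    have h := telesc t N
    have hne : 2 * Real.sin (t/2) ≠ 0 := by positivity
    rw [eq_sub_iff_add_eq, eq_div_iff hne]
    linear_combination h
  have hsplit : (∫ t in (2:ℝ)..π, (Real.sin (((N:ℝ) + 1/2) * t) / (2 * Real.sin (t/2)) - 1/2))
      = (∫ t in (2:ℝ)..π, Real.sin (((N:ℝ) + 1/2) * t) / (2 * Real.sin (t/2))) - (π - 2)/2 := by
    rw [intervalIntegral.integral_sub (((contOn _).mono (by rw [huIcc])).intervalIntegrable)
        (intervalIntegrable_const), intervalIntegral.integral_const]
    norm_num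
    ring
  rw [heq, hsplit] at hint
  linarith [hint]


lemma ibp_bound (lam : ℝ) (hlam : 0 < lam) :
    |∫ t in (2:ℝ)..π, Real.sin (lam * t) / (2 * Real.sin (t/2))|
      ≤ (1/Real.sin 1 + π / (4 * Real.sin 1 ^ 2)) / lam := by
  have hlam0 : lam ≠ 0 := ne_of_gt hlam
  have hlampos : 0 < lam := hlam
  have hs1 := sin1_pos
  have huIcc : Set.uIcc (2:ℝ) π = Set.Icc 2 π := Set.uIcc_of_le h2pi
  set u : ℝ → ℝ := fun t => (2 * Real.sin (t/2))⁻¹ with hu_def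
  set u' : ℝ → ℝ := fun t => -Real.cos (t/2) / (4 * Real.sin (t/2)^2) with hu'_def
  set v : ℝ → ℝ := fun t => -Real.cos (lam*t)/lam with hv_def
  have hu : ∀ x ∈ Set.uIcc (2:ℝ) π, HasDerivAt u (u' x) x := by
    intro x hx
    rw [huIcc] at hx
    have hs := sinhalf_pos hx.1 hx.2
    have h1 : HasDerivAt (fun t : ℝ => 2 * Real.sin (t/2)) (2 * (Real.cos (x/2) * (1/2))) x :=
      (((hasDerivAt_id x).div_const 2).sin).const_mul 2
    have h2 := h1.inv (by positivity)
    refine h2.congr_deriv ?_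
    rw [hu'_def]
    simp only []
    rw [show ((2:ℝ) * Real.sin (x/2))^2 = 4 * Real.sin (x/2)^2 by ring]
    congr 1
    ring
  have hv : ∀ x ∈ Set.uIcc (2:ℝ) π, HasDerivAt v (Real.sin (lam*x)) x := by
    intro x _
    have h1 : HasDerivAt (fun t : ℝ => Real.cos (lam*t)) (-Real.sin (lam*x) * lam) x := by
      simpa using ((hasDerivAt_id x).const_mul lam).cos
    have h2 := (h1.neg).div_const lam
    refine h2.congr_deriv ?_
    field_simp
  have hu'cont : ContinuousOn u' (Set.Icc 2 π) := by
    apply ContinuousOn.div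
    · fun_prop
    · fun_prop
    · intro t ht
      have := sinhalf_pos ht.1 ht.2
      positivity
  have hu'int : IntervalIntegrable u' MeasureTheory.volume 2 π :=
    (hu'cont.mono (by rw [huIcc])).intervalIntegrable
  have hv'int : IntervalIntegrable (fun t => Real.sin (lam*t)) MeasureTheory.volume 2 π :=
    (by fun_prop : Continuous fun t : ℝ => Real.sin (lam*t)).intervalIntegrable _ _
  have hibp := intervalIntegral.integral_mul_deriv_eq_deriv_mul hu hv hu'int hv'int
  have hrw : (∫ t in (2:ℝ)..π, Real.sin (lam * t) / (2 * Real.sin (t/2)))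
      = ∫ t in (2:ℝ)..π, u t * Real.sin (lam*t) := by
    apply intervalIntegral.integral_congr
    intro t _
    rw [hu_def]
    simp [div_eq_inv_mul]
  rw [hrw, hibp]
  have hubound : ∀ t, 2 ≤ t → t ≤ π → |u t| ≤ 1/(2 * Real.sin 1) := by
    intro t h1 h2
    have hs := sinhalf_pos h1 h2
    have hle := sin1_le h1 h2
    rw [show |u t| = |(2 * Real.sin (t/2))⁻¹| from rfl, abs_of_pos (by positivity), one_div]
    exact inv_anti₀ (by positivity) (by linarith)
  have hvbound : ∀ t, |v t| ≤ 1/lam := by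
    intro t
    rw [show |v t| = |-Real.cos (lam*t)/lam| from rfl, abs_div, abs_neg, abs_of_pos hlampos]
    gcongr
    exact Real.abs_cos_le_one _
  have hIbnd : |∫ t in (2:ℝ)..π, u' t * v t| ≤ 1/(4 * Real.sin 1 ^ 2) * (1/lam) * (π - 2) := by
    have := intervalIntegral.norm_integral_le_of_norm_le_const
      (C := 1/(4 * Real.sin 1 ^ 2) * (1/lam)) (f := fun t => u' t * v t) (a := (2:ℝ)) (b := π) ?_
    · rw [Real.norm_eq_abs, abs_of_nonneg (show (0:ℝ) ≤ π - 2 by linarith [h2pi])] at this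
      exact this
    · intro x hx
      rw [Set.uIoc_of_le h2pi] at hx
      have hx1 : 2 ≤ x := le_of_lt hx.1
      have hx2 : x ≤ π := hx.2
      have hs := sinhalf_pos hx1 hx2
      have hle := sin1_le hx1 hx2
      rw [Real.norm_eq_abs, abs_mul]
      have h1 : |u' x| ≤ 1/(4 * Real.sin 1 ^ 2) := by
        rw [show |u' x| = |-Real.cos (x/2) / (4 * Real.sin (x/2)^2)| from rfl, abs_div, abs_neg,
          abs_of_pos (by positivity : (0:ℝ) < 4 * Real.sin (x/2)^2)]
        apply div_le_div₀ (by positivity) (Real.abs_cos_le_one _) (by positivity)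
        nlinarith
      calc |u' x| * |v x| ≤ (1/(4 * Real.sin 1 ^ 2)) * (1/lam) :=
            mul_le_mul h1 (hvbound x) (abs_nonneg _) (by positivity)
        _ = _ := rfl
  calc |u π * v π - u 2 * v 2 - ∫ t in (2:ℝ)..π, u' t * v t|
      ≤ |u π * v π| + |u 2 * v 2| + |∫ t in (2:ℝ)..π, u' t * v t| := by
        have t1 := abs_sub (u π * v π - u 2 * v 2) (∫ t in (2:ℝ)..π, u' t * v t)
        have t2 := abs_sub (u π * v π) (u 2 * v 2)
        linarith
    _ ≤ 1/(2*Real.sin 1) * (1/lam) + 1/(2*Real.sin 1) * (1/lam)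
        + 1/(4 * Real.sin 1 ^ 2) * (1/lam) * (π - 2) := by
        have b1 : |u π * v π| ≤ 1/(2*Real.sin 1) * (1/lam) := by
          rw [abs_mul]
          exact mul_le_mul (hubound π h2pi le_rfl) (hvbound π) (abs_nonneg _) (by positivity)
        have b2 : |u 2 * v 2| ≤ 1/(2*Real.sin 1) * (1/lam) := by
          rw [abs_mul]
          exact mul_le_mul (hubound 2 le_rfl h2pi) (hvbound 2) (abs_nonneg _) (by positivity)
        linarith
    _ = (1/Real.sin 1 + (π-2) / (4 * Real.sin 1 ^ 2)) / lam := by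
        field_simp
        ring
    _ ≤ (1/Real.sin 1 + π / (4 * Real.sin 1 ^ 2)) / lam := by
        gcongr
        linarith

theorem stmt10 : (Tendsto (fun N : ℕ => ∑ n ∈ Finset.Icc 1 N, Real.sin (2 * n) / (2 * n)) atTop (𝓝 ((π - 2) / 4))) ∧
    (Tendsto (fun N : ℕ => ∑ n ∈ Finset.Icc 1 N, (Real.sin (2 * n) / (2 * n)) ^ 2) atTop (𝓝 ((π - 2) / 4))) := by
  constructor
  · -- first sum
    have hI : Tendsto (fun N : ℕ => ∫ t in (2:ℝ)..π,
        Real.sin (((N:ℝ) + 1/2) * t) / (2 * Real.sin (t/2))) atTop (𝓝 0) := by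
      apply squeeze_zero_norm (a := fun N : ℕ =>
        (1/Real.sin 1 + π / (4 * Real.sin 1 ^ 2)) / ((N:ℝ) + 1/2))
      · intro N
        exact_mod_cast ibp_bound ((N:ℝ) + 1/2) (by positivity)
      · apply Filter.Tendsto.div_atTop tendsto_const_nhds
        exact Filter.tendsto_atTop_add_const_right atTop (1/2) tendsto_natCast_atTop_atTop
    have hEq : ∀ N : ℕ, ∑ n ∈ Finset.Icc 1 N, Real.sin (2 * n) / (2 * n)
        = ((π - 2)/2 - ∫ t in (2:ℝ)..π, Real.sin (((N:ℝ) + 1/2) * t) / (2 * Real.sin (t/2)))/2 := by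
      intro N
      rw [← keyid N, Finset.sum_div]
      apply Finset.sum_congr rfl
      intro n _
      rw [div_div, mul_comm]
    have h0 : Tendsto (fun N : ℕ => ((π - 2)/2 - ∫ t in (2:ℝ)..π,
        Real.sin (((N:ℝ) + 1/2) * t) / (2 * Real.sin (t/2)))/2) atTop (𝓝 (((π-2)/2 - 0)/2)) :=
      (tendsto_const_nhds.sub hI).div_const 2
    simp only [hEq]
    convert h0 using 2
    ring
  · -- second sum
    have hπ := Real.pi_pos
    have hx : (2/π : ℝ) ∈ Set.Icc (0:ℝ) 1 :=
      ⟨by positivity, by rw [div_le_one hπ]; exact h2pi⟩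
    have h1 := hasSum_one_div_nat_pow_mul_cos one_ne_zero hx
    have hne : π ≠ 0 := ne_of_gt hπ
    have hfeq : (fun n : ℕ => 1/(n:ℝ)^(2*1) * Real.cos (2*π*n*(2/π)))
        = fun n : ℕ => 1/(n:ℝ)^2 * Real.cos (4*n) := by
      funext n
      rw [show 2*π*(n:ℝ)*(2/π) = 4*n by field_simp; ring]
    rw [hfeq] at h1
    have h1' : HasSum (fun n : ℕ => 1/(n:ℝ)^2 * Real.cos (4*n))
        ((-1:ℝ) ^ 2 * (2 * π) ^ 2 / 2 / (2).factorial *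
          Polynomial.eval (2/π) (Polynomial.map (algebraMap ℚ ℝ) (Polynomial.bernoulli 2))) := by
      convert h1 using 2 <;> norm_num
    have hval : ((-1:ℝ) ^ 2 * (2 * π) ^ 2 / 2 / (2).factorial *
          Polynomial.eval (2/π) (Polynomial.map (algebraMap ℚ ℝ) (Polynomial.bernoulli 2)))
        = 4 - 2*π + π^2/6 := by
      have hb : Polynomial.eval (2/π) (Polynomial.map (algebraMap ℚ ℝ) (Polynomial.bernoulli 2))
          = (2/π)^2 - 2/π + 1/6 := by
        simp [Polynomial.bernoulli, Finset.sum_range_succ]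
        norm_num [bernoulli]
        ring
      rw [hb, Nat.factorial]
      field_simp
      ring
    rw [hval] at h1'
    have h2 := hasSum_zeta_two
    have hsum := (h2.sub h1').div_const 8
    have hfun : (fun n : ℕ => (1/(n:ℝ)^2 - 1/(n:ℝ)^2 * Real.cos (4*n))/8)
        = fun n : ℕ => (Real.sin (2*n)/(2*n))^2 := by
      funext n
      rcases Nat.eq_zero_or_pos n with h | h
      · subst h; simp
      · have hn : (n:ℝ) ≠ 0 := by positivity
        have hc : Real.cos (4*(n:ℝ)) = 1 - 2*Real.sin (2*n)^2 := by
          have e1 := Real.cos_two_mul (2*(n:ℝ))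
          have e2 := Real.sin_sq_add_cos_sq (2*(n:ℝ))
          rw [show (4:ℝ)*n = 2*(2*(n:ℝ)) by ring]
          linarith
        rw [hc]
        field_simp
        ring
    rw [hfun] at hsum
    have hS : (π^2/6 - (4 - 2*π + π^2/6))/8 = (π - 2)/4 := by ring
    rw [hS] at hsum
    have htd := hsum.tendsto_sum_nat
    have hshift : Tendsto (fun N : ℕ => ∑ n ∈ Finset.range (N+1),
        (Real.sin (2*n)/(2*n))^2) atTop (𝓝 ((π - 2)/4)) :=
      htd.comp (tendsto_add_atTop_nat 1)
    have hIcc : ∀ N : ℕ, ∑ n ∈ Finset.range (N+1), (Real.sin (2*(n:ℝ))/(2*n))^2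
        = ∑ n ∈ Finset.Icc 1 N, (Real.sin (2*n)/(2*n))^2 := by
      intro N
      rw [show Finset.range (N+1) = insert 0 (Finset.Icc 1 N) by ext m; simp; omega,
        Finset.sum_insert (by simp)]
      simp
    simpa only [hIcc] using hshift
end
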